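/- Let A be a symmetric real N×N matrix and b ∈ ℝ^N, and suppose the N×(N+1) block matrix [A b] has rank N. Let H be the (2N+1)×(2N+1) real symmetric matrix with block form H = [[A, 0, b], [0, −A, −b], [bᵀ, −bᵀ, 0]]. Then the kernel of H (as a linear map on ℝ^N × ℝ^N × ℝ) equals {(ξ, ξ, τ) : Aξ + τb = 0}, and this kernel is one-dimensional. -/

import Mathlib

open Matrix

/-- Lemma 6.1 (kernel computation): for `A` symmetric with `[A b]` of full rank `N`,
the kernel of the Hessian block map
`H(ξ,η,τ) = (Aξ + τb, -Aη - τb, bᵀξ - bᵀη)` is the diagonal line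
`{(ξ,ξ,τ) : Aξ + τb = 0}`, which is one-dimensional. -/
theorem stmt_4 {N : ℕ} (A : Matrix (Fin N) (Fin N) ℝ) (hA : Aᵀ = A) (b : Fin N → ℝ)
    (hrank : (Matrix.fromCols A (Matrix.replicateCol Unit b)).rank = N)
    (H : ((Fin N → ℝ) × (Fin N → ℝ) × ℝ) →ₗ[ℝ] ((Fin N → ℝ) × (Fin N → ℝ) × ℝ))
    (hH : ∀ (ξ η : Fin N → ℝ) (τ : ℝ),
      H (ξ, η, τ) = (A.mulVec ξ + τ • b, -(A.mulVec η) - τ • b, b ⬝ᵥ ξ - b ⬝ᵥ η)) :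
    (LinearMap.ker H : Set ((Fin N → ℝ) × (Fin N → ℝ) × ℝ))
        = {p | p.1 = p.2.1 ∧ A.mulVec p.1 + p.2.2 • b = 0} ∧
    Module.finrank ℝ (LinearMap.ker H) = 1 := by
  set M := Matrix.fromCols A (Matrix.replicateCol Unit b) with hM
  -- key: Ax = 0 ∧ b ⬝ x = 0 → x = 0
  have hkey : ∀ x : Fin N → ℝ, A.mulVec x = 0 → b ⬝ᵥ x = 0 → x = 0 := by
    intro x hAx hbx
    have hrt : Mᵀ.rank = N := by rw [Matrix.rank_transpose]; exact hrank
    have hrn := Mᵀ.mulVecLin.finrank_range_add_finrank_ker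
    have hdom : Module.finrank ℝ (Fin N → ℝ) = N := by simp
    have hker0 : Module.finrank ℝ (LinearMap.ker Mᵀ.mulVecLin) = 0 := by
      rw [hdom] at hrn
      have : Mᵀ.rank = Module.finrank ℝ (LinearMap.range Mᵀ.mulVecLin) := rfl
      omega
    have hbot : LinearMap.ker Mᵀ.mulVecLin = ⊥ := Submodule.finrank_eq_zero.mp hker0
    have hx : Mᵀ.mulVec x = 0 := by
      funext i
      cases i with
      | inl k =>
        have hsym : (fun j => A k j) = fun j => A j k := by
          funext j; exact congrFun (congrFun hA j) k
        have := congrFun hAx k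
        simpa [hM, Matrix.transpose_fromCols, Matrix.fromRows_mulVec, hsym,
          Matrix.mulVec] using this
      | inr u =>
        simpa [hM, Matrix.transpose_fromCols, Matrix.fromRows_mulVec,
          Matrix.mulVec, Matrix.replicateCol, dotProduct] using hbx
    have : x ∈ LinearMap.ker Mᵀ.mulVecLin := hx
    rwa [hbot, Submodule.mem_bot] at this
  -- set equality
  have hset : (LinearMap.ker H : Set ((Fin N → ℝ) × (Fin N → ℝ) × ℝ))
      = {p | p.1 = p.2.1 ∧ A.mulVec p.1 + p.2.2 • b = 0} := by
    ext ⟨ξ, η, τ⟩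
    have hzero : (0 : (Fin N → ℝ) × (Fin N → ℝ) × ℝ) = (0, 0, 0) := rfl
    simp only [SetLike.mem_coe, LinearMap.mem_ker, hH, Set.mem_setOf_eq, hzero, Prod.mk.injEq]
    constructor
    · rintro ⟨h1, h2, h3⟩
      have h2' : A.mulVec η + τ • b = 0 := by
        have : -(A.mulVec η + τ • b) = 0 := by rw [neg_add]; rw [← sub_eq_add_neg]; exact h2
        exact neg_eq_zero.mp this
      have hd : ξ = η := by
        have hsub : A.mulVec (ξ - η) = 0 := by
          rw [Matrix.mulVec_sub]
          have : A.mulVec ξ - A.mulVec η = (A.mulVec ξ + τ • b) - (A.mulVec η + τ • b) := by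
            abel
          rw [this, h1, h2', sub_zero]
        have hbsub : b ⬝ᵥ (ξ - η) = 0 := by
          rw [dotProduct_sub]; exact h3
        have := hkey _ hsub hbsub
        exact sub_eq_zero.mp this
      exact ⟨hd, h1⟩
    · rintro ⟨hξη, h0⟩
      refine ⟨h0, ?_, ?_⟩
      · rw [← hξη]
        have : -(A.mulVec ξ) - τ • b = -(A.mulVec ξ + τ • b) := by abel
        rw [this, h0, neg_zero]
      · rw [hξη, sub_self]
  refine ⟨hset, ?_⟩
  -- dimension count
  let g : ((Fin N ⊕ Unit) → ℝ) →ₗ[ℝ] ((Fin N → ℝ) × (Fin N → ℝ) × ℝ) :=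
    { toFun := fun v => (v ∘ Sum.inl, v ∘ Sum.inl, v (Sum.inr ()))
      map_add' := fun _ _ => rfl
      map_smul' := fun _ _ => rfl }
  have hginj : Function.Injective g := by
    intro v w h
    have h1 : v ∘ Sum.inl = w ∘ Sum.inl := congrArg Prod.fst h
    have h2 : v (Sum.inr ()) = w (Sum.inr ()) := congrArg (fun p => p.2.2) h
    funext i
    cases i with
    | inl k => exact congrFun h1 k
    | inr u => cases u; exact h2
  have hMv : ∀ v : (Fin N ⊕ Unit) → ℝ,
      M.mulVec v = A.mulVec (v ∘ Sum.inl) + (v (Sum.inr ())) • b := by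
    intro v
    have hv : v = Sum.elim (v ∘ Sum.inl) (fun _ => v (Sum.inr ())) := by
      funext i; cases i with
      | inl k => rfl
      | inr u => cases u; rfl
    rw [hM]
    conv_lhs => rw [hv]
    rw [Matrix.fromCols_mulVec_sumElim]
    congr 1
    funext i
    simp [Matrix.mulVec, Matrix.replicateCol, dotProduct, mul_comm]
  have hmap : LinearMap.ker H = (LinearMap.ker M.mulVecLin).map g := by
    apply le_antisymm
    · intro p hp
      have hp' : p ∈ (LinearMap.ker H : Set _) := hp
      rw [hset] at hp'
      obtain ⟨h1, h2⟩ := hp'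
      refine ⟨Sum.elim p.1 (fun _ => p.2.2), ?_, ?_⟩
      · show M.mulVec (Sum.elim p.1 fun _ => p.2.2) = 0
        rw [hMv]
        simpa using h2
      · show (_, _, _) = p
        obtain ⟨ξ, η, τ⟩ := p
        simp only at h1
        simp [g, ← h1]
    · rintro p ⟨v, hv, rfl⟩
      have hv' : M.mulVec v = 0 := hv
      rw [hMv] at hv'
      show g v ∈ (LinearMap.ker H : Set _)
      rw [hset]
      exact ⟨rfl, hv'⟩
  rw [hmap]
  have e := (Submodule.equivMapOfInjective g hginj (LinearMap.ker M.mulVecLin)).symm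
  rw [LinearEquiv.finrank_eq e]
  have hrn := M.mulVecLin.finrank_range_add_finrank_ker
  have hdom : Module.finrank ℝ ((Fin N ⊕ Unit) → ℝ) = N + 1 := by
    rw [Module.finrank_fintype_fun_eq_card]; simp
  have hr : Module.finrank ℝ (LinearMap.range M.mulVecLin) = N := hrank
  omega
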